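/- Let i₁, i₂ be positive integers with i₂ > i₁ ≥ 1. Then the double integral ∫₀¹ ∫₀¹ 1/(x₁^{i₁}·x₂^{i₂} + q) dx₂ dx₁ satisfies ∫₀¹ ∫₀¹ 1/(x₁^{i₁}·x₂^{i₂} + q) dx₂ dx₁ = Θ(q^(−1 + 1/i₂)) as q → 0⁺. -/

import Mathlib

open MeasureTheory Filter Topology

/-- `I = Θ(R)` as `q → 0⁺`: there exist constants `0 < c ≤ C` and `q₀ > 0` such that
`c·R q ≤ I q ≤ C·R q` for all `0 < q < q₀`. -/
def IsThetaAtZero (I R : ℝ → ℝ) : Prop :=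
  ∃ c C q₀ : ℝ, 0 < c ∧ c ≤ C ∧ 0 < q₀ ∧
    ∀ q : ℝ, 0 < q → q < q₀ → c * R q ≤ I q ∧ I q ≤ C * R q

section Aux

open Real Set intervalIntegral

lemma aux_denom_pos {n : ℕ} {b q x : ℝ} (hb : 0 ≤ b) (hq : 0 < q) (hx : 0 ≤ x) :
    0 < b * x ^ n + q := by positivity

/-- Interval integrability of `x ↦ 1/(b x^n + q)` on nonnegative intervals. -/
lemma aux_ii {n : ℕ} {b q : ℝ} (hb : 0 ≤ b) (hq : 0 < q) {u v : ℝ} (hu : 0 ≤ u) (hv : 0 ≤ v) :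
    IntervalIntegrable (fun x : ℝ => 1 / (b * x ^ n + q)) volume u v := by
  apply ContinuousOn.intervalIntegrable
  apply ContinuousOn.div continuousOn_const
  · exact (continuousOn_const.mul (continuousOn_pow n)).add continuousOn_const
  · intro x hx
    have hx0 : 0 ≤ x := le_trans (le_min hu hv) hx.1
    exact (aux_denom_pos hb hq hx0).ne'

/-- Lower bound for the inner integral. -/
lemma aux_inner_lower {n : ℕ} (hn : 1 ≤ n) {b q : ℝ} (hb0 : 0 ≤ b) (hb1 : b ≤ 1)
    (hq : 0 < q) (hq1 : q < 1) :
    (1 / 2) * q ^ ((n : ℝ)⁻¹ - 1) ≤ ∫ x in (0:ℝ)..1, 1 / (b * x ^ n + q) := by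
  set s : ℝ := q ^ ((n : ℝ)⁻¹) with hs
  have hs0 : 0 < s := Real.rpow_pos_of_pos hq _
  have hs1 : s ≤ 1 := Real.rpow_le_one hq.le hq1.le (by positivity)
  have hsn : s ^ n = q := Real.rpow_inv_natCast_pow hq.le (by omega)
  have h1 : ∫ x in (0:ℝ)..s, (1 / (2 * q)) ≤ ∫ x in (0:ℝ)..s, 1 / (b * x ^ n + q) := by
    apply integral_mono_on hs0.le intervalIntegrable_const (aux_ii hb0 hq le_rfl hs0.le)
    intro x hx
    have hx0 : 0 ≤ x := hx.1
    have hxn : x ^ n ≤ q := by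
      calc x ^ n ≤ s ^ n := pow_le_pow_left₀ hx0 hx.2 n
        _ = q := hsn
    have hle : b * x ^ n + q ≤ 2 * q := by nlinarith [pow_nonneg hx0 n]
    exact one_div_le_one_div_of_le (aux_denom_pos hb0 hq hx0) hle
  have h2 : (0:ℝ) ≤ ∫ x in s..1, 1 / (b * x ^ n + q) := by
    apply integral_nonneg hs1
    intro x hx
    have hx0 : 0 ≤ x := le_trans hs0.le hx.1
    have := aux_denom_pos (n := n) (x := x) hb0 hq hx0
    positivity
  have hsplit : (∫ x in (0:ℝ)..s, 1 / (b * x ^ n + q)) + ∫ x in s..1, 1 / (b * x ^ n + q)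
      = ∫ x in (0:ℝ)..1, 1 / (b * x ^ n + q) :=
    integral_add_adjacent_intervals (aux_ii hb0 hq le_rfl hs0.le)
      (aux_ii hb0 hq hs0.le zero_le_one)
  have hconst : ∫ x in (0:ℝ)..s, (1 / (2 * q)) = s * (1 / (2 * q)) := by
    simp [smul_eq_mul]
    ring
  have hval : (1 / 2) * q ^ ((n : ℝ)⁻¹ - 1) = s * (1 / (2 * q)) := by
    rw [Real.rpow_sub hq, Real.rpow_one, hs]
    field_simp
  rw [hval, ← hsplit]
  rw [hconst] at h1
  linarith

/-- Upper bound for the inner integral. -/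
lemma aux_inner_upper {n : ℕ} (hn : 2 ≤ n) {a q : ℝ} (ha : 0 < a) (hq : 0 < q) :
    (∫ x in (0:ℝ)..1, 1 / (a * x ^ n + q))
      ≤ 2 * (a ^ (-(n : ℝ)⁻¹) * q ^ ((n : ℝ)⁻¹ - 1)) := by
  have hB0 : 0 ≤ a ^ (-(n : ℝ)⁻¹) * q ^ ((n : ℝ)⁻¹ - 1) := by positivity
  rcases le_or_gt a q with hle | hlt
  · -- small a : integrand ≤ 1/q
    have h1 : (∫ x in (0:ℝ)..1, 1 / (a * x ^ n + q)) ≤ ∫ x in (0:ℝ)..1, (1 / q) := by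
      apply integral_mono_on zero_le_one (aux_ii ha.le hq le_rfl zero_le_one)
        intervalIntegrable_const
      intro x hx
      apply one_div_le_one_div_of_le hq
      nlinarith [mul_nonneg ha.le (pow_nonneg hx.1 n)]
    have h2 : ∫ x in (0:ℝ)..1, (1 / q) = 1 / q := by simp
    have h3 : (1 : ℝ) / q ≤ a ^ (-(n : ℝ)⁻¹) * q ^ ((n : ℝ)⁻¹ - 1) := by
      have hq' : q ^ (-(n : ℝ)⁻¹) ≤ a ^ (-(n : ℝ)⁻¹) :=
        Real.rpow_le_rpow_of_nonpos ha hle (neg_nonpos.mpr (by positivity))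
      have hqq : q ^ (-(n : ℝ)⁻¹) * q ^ ((n : ℝ)⁻¹ - 1) = 1 / q := by
        rw [← Real.rpow_add hq]
        have he : -(n : ℝ)⁻¹ + ((n : ℝ)⁻¹ - 1) = -1 := by ring
        rw [he, Real.rpow_neg_one, one_div]
      rw [← hqq]
      have : (0:ℝ) ≤ q ^ ((n : ℝ)⁻¹ - 1) := by positivity
      exact mul_le_mul_of_nonneg_right hq' this
    linarith
  · -- large a : split at s = (q/a)^{1/n}
    set s : ℝ := (q / a) ^ ((n : ℝ)⁻¹) with hs
    have hqa0 : 0 < q / a := div_pos hq ha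
    have hs0 : 0 < s := Real.rpow_pos_of_pos hqa0 _
    have hs1 : s < 1 :=
      Real.rpow_lt_one hqa0.le (by rw [div_lt_one ha]; exact hlt) (by positivity)
    have hsn : s ^ n = q / a := Real.rpow_inv_natCast_pow hqa0.le (by omega)
    -- value of s/q equals the bound
    have hkey : s / q = a ^ (-(n : ℝ)⁻¹) * q ^ ((n : ℝ)⁻¹ - 1) := by
      rw [hs, Real.div_rpow hq.le ha.le, Real.rpow_neg ha.le, Real.rpow_sub hq, Real.rpow_one]
      field_simp
    -- first piece
    have h1 : (∫ x in (0:ℝ)..s, 1 / (a * x ^ n + q)) ≤ s / q := by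
      have : (∫ x in (0:ℝ)..s, 1 / (a * x ^ n + q)) ≤ ∫ x in (0:ℝ)..s, (1 / q) := by
        apply integral_mono_on hs0.le (aux_ii ha.le hq le_rfl hs0.le) intervalIntegrable_const
        intro x hx
        apply one_div_le_one_div_of_le hq
        nlinarith [mul_nonneg ha.le (pow_nonneg hx.1 n)]
      calc (∫ x in (0:ℝ)..s, 1 / (a * x ^ n + q)) ≤ ∫ x in (0:ℝ)..s, (1 / q) := this
        _ = s * (1 / q) := by simp [smul_eq_mul]
        _ = s / q := by ring
    -- second piece
    have hii2 : IntervalIntegrable (fun x : ℝ => a⁻¹ * x ^ (-(n : ℝ))) volume s 1 := by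
      apply ContinuousOn.intervalIntegrable
      apply continuousOn_const.mul
      apply ContinuousOn.rpow_const continuousOn_id
      intro x hx
      have hx0 : 0 < x := lt_of_lt_of_le hs0 (le_trans (le_min le_rfl hs1.le) hx.1)
      exact Or.inl hx0.ne'
    have h2 : (∫ x in s..1, 1 / (a * x ^ n + q)) ≤ ∫ x in s..1, a⁻¹ * x ^ (-(n : ℝ)) := by
      apply integral_mono_on hs1.le (aux_ii ha.le hq hs0.le zero_le_one) hii2
      intro x hx
      have hx0 : 0 < x := lt_of_lt_of_le hs0 hx.1
      have hxn : (0:ℝ) < a * x ^ n := by positivity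
      rw [Real.rpow_neg hx0.le, Real.rpow_natCast]
      rw [← mul_inv, one_div]
      apply inv_anti₀ hxn
      linarith
    have hrne : (-(n:ℝ) + 1) ≠ 0 := by
      have : (2:ℝ) ≤ (n:ℝ) := by exact_mod_cast hn
      intro h; nlinarith
    have hint2 : ∫ x in s..1, a⁻¹ * x ^ (-(n : ℝ))
        = a⁻¹ * ((1 - s ^ (-(n:ℝ) + 1)) / (-(n:ℝ) + 1)) := by
      rw [intervalIntegral.integral_const_mul, integral_rpow]
      · rw [Real.one_rpow]
      · right
        constructor
        · intro h
          have : (2:ℝ) ≤ (n:ℝ) := by exact_mod_cast hn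
          have := neg_eq_iff_eq_neg.mp h
          nlinarith
        · intro h
          rw [Set.mem_uIcc] at h
          rcases h with ⟨h, _⟩ | ⟨h, _⟩ <;> linarith
    have hspow : s ^ (-(n:ℝ) + 1) = s * (a / q) := by
      rw [Real.rpow_add hs0, Real.rpow_one, Real.rpow_neg hs0.le, Real.rpow_natCast, hsn,
        inv_div]
      ring
    have h2' : (∫ x in s..1, 1 / (a * x ^ n + q)) ≤ s / q := by
      have hX : (0:ℝ) ≤ s ^ (-(n:ℝ) + 1) := Real.rpow_nonneg hs0.le _
      have hn2 : (2:ℝ) ≤ (n:ℝ) := by exact_mod_cast hn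
      have hfrac : a⁻¹ * ((1 - s ^ (-(n:ℝ) + 1)) / (-(n:ℝ) + 1)) ≤ a⁻¹ * s ^ (-(n:ℝ) + 1) := by
        apply mul_le_mul_of_nonneg_left _ (inv_nonneg.mpr ha.le)
        rw [div_le_iff_of_neg (by linarith : (-(n:ℝ) + 1) < 0)]
        nlinarith
      have heq : a⁻¹ * s ^ (-(n:ℝ) + 1) = s / q := by
        rw [hspow]; field_simp
      calc (∫ x in s..1, 1 / (a * x ^ n + q)) ≤ ∫ x in s..1, a⁻¹ * x ^ (-(n : ℝ)) := h2
        _ = a⁻¹ * ((1 - s ^ (-(n:ℝ) + 1)) / (-(n:ℝ) + 1)) := hint2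
        _ ≤ a⁻¹ * s ^ (-(n:ℝ) + 1) := hfrac
        _ = s / q := heq
    have hsplit : (∫ x in (0:ℝ)..s, 1 / (a * x ^ n + q)) + ∫ x in s..1, 1 / (a * x ^ n + q)
        = ∫ x in (0:ℝ)..1, 1 / (a * x ^ n + q) :=
      integral_add_adjacent_intervals (aux_ii ha.le hq le_rfl hs0.le)
        (aux_ii ha.le hq hs0.le zero_le_one)
    rw [← hkey, ← hsplit]
    linarith

end Aux

/-- Theorem 4.3, Cases 1 and 2: for positive integers `i₂ > i₁ ≥ 1`,
`∫₀¹ ∫₀¹ 1/(x₁^{i₁}·x₂^{i₂} + q) dx₂ dx₁ = Θ(q^(−1 + 1/i₂))` as `q → 0⁺`. -/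
theorem two_dim_monomial_scaling_distinct (i₁ i₂ : ℕ) (h1 : 1 ≤ i₁) (h2 : i₁ < i₂) :
    IsThetaAtZero
      (fun q : ℝ => ∫ x₁ in (0:ℝ)..1, ∫ x₂ in (0:ℝ)..1, 1 / (x₁ ^ i₁ * x₂ ^ i₂ + q))
      (fun q : ℝ => q ^ (-1 + 1/(i₂:ℝ))) := by
  have hn2 : 2 ≤ i₂ := by omega
  have hn0 : (0:ℝ) < (i₂:ℝ) := by
    have : (0:ℕ) < i₂ := by omega
    exact_mod_cast this
  have hml : (i₁:ℝ) < (i₂:ℝ) := by exact_mod_cast h2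
  have hm0 : (0:ℝ) < (i₁:ℝ) := by
    have : (0:ℕ) < i₁ := by omega
    exact_mod_cast this
  have hd : 0 < 1 - (i₁:ℝ)/(i₂:ℝ) := by
    have : (i₁:ℝ)/(i₂:ℝ) < 1 := (div_lt_one hn0).mpr hml
    linarith
  refine ⟨1/2, 2 / (1 - (i₁:ℝ)/(i₂:ℝ)), 1, by norm_num, ?_, one_pos, ?_⟩
  · have h2le : (2:ℝ) ≤ 2 / (1 - (i₁:ℝ)/(i₂:ℝ)) := by
      rw [le_div_iff₀ hd]
      have : (i₁:ℝ)/(i₂:ℝ) > 0 := by positivity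
      nlinarith
    linarith
  intro q hq hq1
  have hexp : q ^ (-1 + 1/(i₂:ℝ)) = q ^ ((i₂:ℝ)⁻¹ - 1) := by
    congr 1
    rw [one_div]
    ring
  set g : ℝ → ℝ := fun x₁ => ∫ x₂ in (0:ℝ)..1, 1 / (x₁ ^ i₁ * x₂ ^ i₂ + q) with hg
  -- measurability of the inner integral as a function of x₁
  have key_meas : ∀ s : Set ℝ, AEStronglyMeasurable g (volume.restrict s) := by
    intro s
    have heq : g = fun x₁ => ∫ x₂ in Set.Ioc (0:ℝ) 1, 1 / (x₁ ^ i₁ * x₂ ^ i₂ + q) := by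
      funext x₁
      exact intervalIntegral.integral_of_le zero_le_one
    rw [heq]
    have hmeas : Measurable (fun p : ℝ × ℝ => 1 / (p.1 ^ i₁ * p.2 ^ i₂ + q)) := by
      apply Measurable.div measurable_const
      exact ((measurable_fst.pow_const i₁).mul (measurable_snd.pow_const i₂)).add
        measurable_const
    exact (StronglyMeasurable.integral_prod_right'
      (f := fun p : ℝ × ℝ => 1 / (p.1 ^ i₁ * p.2 ^ i₂ + q))
      hmeas.stronglyMeasurable).aestronglyMeasurable.restrict
  have key_bound : ∀ x₁ ∈ Set.Icc (0:ℝ) 1, ‖g x₁‖ ≤ 1 / q := by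
    intro x₁ hx₁
    have hb : ∀ x₂ ∈ Set.uIoc (0:ℝ) 1, ‖1 / (x₁ ^ i₁ * x₂ ^ i₂ + q)‖ ≤ 1 / q := by
      intro x₂ hx₂
      rw [Set.uIoc_of_le zero_le_one] at hx₂
      have h1 : 0 < x₁ ^ i₁ * x₂ ^ i₂ + q := by
        have := mul_nonneg (pow_nonneg hx₁.1 i₁) (pow_nonneg hx₂.1.le i₂)
        linarith
      rw [Real.norm_eq_abs, abs_of_nonneg (by positivity)]
      apply one_div_le_one_div_of_le hq
      have := mul_nonneg (pow_nonneg hx₁.1 i₁) (pow_nonneg hx₂.1.le i₂)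
      linarith
    calc ‖g x₁‖ ≤ 1/q * |(1:ℝ) - 0| := intervalIntegral.norm_integral_le_of_norm_le_const hb
      _ = 1/q := by norm_num
  have hgii : IntervalIntegrable g volume 0 1 := by
    rw [intervalIntegrable_iff, Set.uIoc_of_le zero_le_one]
    apply Integrable.mono' (g := fun _ : ℝ => 1 / q)
      (integrableOn_const measure_Ioc_lt_top.ne) (key_meas _)
    filter_upwards [ae_restrict_mem measurableSet_Ioc] with x hx
    exact key_bound x ⟨hx.1.le, hx.2⟩
  constructor
  · -- lower bound
    show (1/2) * q ^ (-1 + 1/(i₂:ℝ)) ≤ ∫ x₁ in (0:ℝ)..1, g x₁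
    rw [hexp]
    have hpt : ∀ x₁ ∈ Set.Icc (0:ℝ) 1, (1/2) * q ^ ((i₂:ℝ)⁻¹ - 1) ≤ g x₁ := by
      intro x₁ hx₁
      exact aux_inner_lower (by omega) (pow_nonneg hx₁.1 i₁)
        (pow_le_one₀ hx₁.1 hx₁.2) hq hq1
    have := intervalIntegral.integral_mono_on zero_le_one
      intervalIntegrable_const hgii hpt
    simpa using this
  · -- upper bound
    show (∫ x₁ in (0:ℝ)..1, g x₁) ≤ 2 / (1 - (i₁:ℝ)/(i₂:ℝ)) * q ^ (-1 + 1/(i₂:ℝ))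
    rw [hexp]
    set r : ℝ := (i₁:ℝ) * -((i₂:ℝ)⁻¹) with hrdef
    have hr1 : -1 < r := by
      rw [hrdef]
      have : (i₁:ℝ) * ((i₂:ℝ)⁻¹) < 1 := by
        rw [← div_eq_mul_inv]
        linarith
      nlinarith
    have hrp : 0 < r + 1 := by linarith
    set h : ℝ → ℝ := fun x => 2 * q ^ ((i₂:ℝ)⁻¹ - 1) * x ^ r with hh
    have hhii : IntervalIntegrable h volume 0 1 :=
      (intervalIntegral.intervalIntegrable_rpow' hr1).const_mul _
    have hub : ∀ x ∈ Set.Icc (0:ℝ) 1, x ≠ 0 → g x ≤ h x := by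
      intro x hx hx0
      have hxpos : 0 < x := lt_of_le_of_ne hx.1 (Ne.symm hx0)
      have hax : 0 < x ^ i₁ := pow_pos hxpos _
      have hbd := aux_inner_upper hn2 hax hq
      have hxc : (x ^ i₁ : ℝ) ^ (-(i₂:ℝ)⁻¹) = x ^ r := by
        rw [← Real.rpow_natCast x i₁, ← Real.rpow_mul hxpos.le]
      calc g x ≤ 2 * ((x ^ i₁) ^ (-(i₂:ℝ)⁻¹) * q ^ ((i₂:ℝ)⁻¹ - 1)) := hbd
        _ = h x := by rw [hh, hxc]; ring
    have hne : ∀ᵐ x ∂(volume : Measure ℝ), x ≠ 0 := by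
      rw [ae_iff]
      have : {x : ℝ | ¬ x ≠ 0} = {0} := by ext x; simp
      rw [this]
      exact Real.volume_singleton
    have hae : ∀ᵐ x ∂(volume.restrict (Set.Icc (0:ℝ) 1)), g x ≤ h x := by
      filter_upwards [ae_restrict_mem measurableSet_Icc, ae_restrict_of_ae hne] with x hx hx0
      exact hub x hx hx0
    have hmono := intervalIntegral.integral_mono_ae_restrict zero_le_one hgii hhii hae
    have hint : ∫ x in (0:ℝ)..1, h x = 2 * q ^ ((i₂:ℝ)⁻¹ - 1) / (r + 1) := by
      rw [hh]
      rw [intervalIntegral.integral_const_mul]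
      rw [integral_rpow (Or.inl hr1)]
      rw [Real.one_rpow, Real.zero_rpow hrp.ne']
      ring
    have hfin : 2 * q ^ ((i₂:ℝ)⁻¹ - 1) / (r + 1)
        = 2 / (1 - (i₁:ℝ)/(i₂:ℝ)) * q ^ ((i₂:ℝ)⁻¹ - 1) := by
      have : r + 1 = 1 - (i₁:ℝ)/(i₂:ℝ) := by
        rw [hrdef, div_eq_mul_inv]
        ring
      rw [this]
      ring
    calc (∫ x₁ in (0:ℝ)..1, g x₁) ≤ ∫ x in (0:ℝ)..1, h x := hmono
      _ = 2 / (1 - (i₁:ℝ)/(i₂:ℝ)) * q ^ ((i₂:ℝ)⁻¹ - 1) := by rw [hint, hfin]
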